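/- Let f be a monotone submodular function with f(∅) = 0 on a finite linearly ordered ground set E. For positive integers k and s and v ≥ 0, the procedure Cardinality(k, s, v, f) applied to any stream satisfies: whenever there exists a set OPT ⊆ E with f(OPT) ≥ v and |OPT| ≤ k, the returned set S satisfies f(S) ≥ (s/(k+s−1))·v and |S| ≤ s. -/

import Mathlib

open scoped Classical

/-- The single element of `T` maximizing `g` on singletons (an arbitrary maximizer),
or `∅` if `T` is empty. -/
noncomputable def argmaxSingle {n : ℕ} (g : Finset (Fin n) → ℝ) (T : Finset (Fin n)) :
    Finset (Fin n) :=
  if h : T.Nonempty then {Classical.choose (T.exists_max_image (fun e => g {e}) h)} else ∅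

/-- The streaming procedure `Cardinality(k, s, v, g)` applied to the stream `T`
(elements of `Fin n` arrive in increasing order).  If `k = 1` or `s = 1`, it returns the
element maximizing `g`.  Otherwise, Branch 1 takes the first element `e` of the stream
with `g({e}) ≥ v/(k+s-1)` (if any), recurses with parameters `(k, s-1, v - g({e}))` and
function `g(· | e)` on the elements after `e`, and adds `e` to the result; Branch 2
recurses with parameters `(k-1, s, ((k+s-2)/(k+s-1))·v)` and function `g` on the whole
stream; the better of the two outcomes (w.r.t. `g`) is returned. -/
noncomputable def Cardinality {n : ℕ} (k s : ℕ) (v : ℝ) (g : Finset (Fin n) → ℝ)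
    (T : Finset (Fin n)) : Finset (Fin n) :=
  if h : k ≤ 1 ∨ s ≤ 1 then argmaxSingle g T
  else
    let F := T.filter (fun e => v / ((k : ℝ) + s - 1) ≤ g {e})
    let S₁ : Finset (Fin n) :=
      if hF : F.Nonempty then
        let e := F.min' hF
        insert e (Cardinality k (s - 1) (v - g {e})
          (fun A => g (insert e A) - g {e}) (T.filter (fun x => e < x)))
      else ∅
    let S₂ := Cardinality (k - 1) s (((k : ℝ) + s - 2) / ((k : ℝ) + s - 1) * v) g T
    if g S₂ < g S₁ then S₁ else S₂
  termination_by k + s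
  decreasing_by all_goals omega

private lemma argmaxSingle_spec {n : ℕ} (g : Finset (Fin n) → ℝ) (T : Finset (Fin n))
    (hT : T.Nonempty) :
    ∃ m ∈ T, argmaxSingle g T = {m} ∧ ∀ x ∈ T, g {x} ≤ g {m} := by
  unfold argmaxSingle
  rw [dif_pos hT]
  obtain ⟨hm, hmax⟩ := Classical.choose_spec (T.exists_max_image (fun e => g {e}) hT)
  exact ⟨_, hm, rfl, hmax⟩

private lemma cardinality_card_le {n : ℕ} :
    ∀ N k s (v : ℝ) (g : Finset (Fin n) → ℝ) (T : Finset (Fin n)),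
      k + s ≤ N → 1 ≤ s → (Cardinality k s v g T).card ≤ s := by
  intro N
  induction N with
  | zero => intro k s v g T hN hs; omega
  | succ N ih =>
    intro k s v g T hN hs
    rw [Cardinality.eq_def]
    split
    · unfold argmaxSingle
      split
      · simpa using hs
      · simp
    · rename_i h
      have hk2 : 2 ≤ k := by omega
      have hs2 : 2 ≤ s := by omega
      simp only
      split_ifs with h1 h2
      · refine (Finset.card_insert_le _ _).trans ?_
        have key : ∀ (v' : ℝ) (g' : Finset (Fin n) → ℝ) (T' : Finset (Fin n)),
            (Cardinality k (s-1) v' g' T').card + 1 ≤ s := by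
          intro v' g' T'
          have := ih k (s-1) v' g' T' (by omega) (by omega)
          omega
        exact key _ _ _
      · exact ih (k-1) s _ _ _ (by omega) hs
      · simp
      · exact ih (k-1) s _ _ _ (by omega) hs

private lemma cardinality_value {n : ℕ} :
    ∀ N (f : Finset (Fin n) → ℝ),
      (∀ A B : Finset (Fin n), A ⊆ B → f A ≤ f B) →
      (∀ A B : Finset (Fin n), f (A ∪ B) + f (A ∩ B) ≤ f A + f B) →
      f ∅ = 0 →
      ∀ k s : ℕ, 1 ≤ k → 1 ≤ s → ∀ v : ℝ, 0 ≤ v →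
      ∀ T OPT : Finset (Fin n), OPT ⊆ T → v ≤ f OPT → OPT.card ≤ k → k + s ≤ N →
      (s : ℝ) / ((k : ℝ) + s - 1) * v ≤ f (Cardinality k s v f T) := by
  intro N
  induction N with
  | zero => intro f _ _ _ k s hk hs v _ T OPT _ _ _ hN; omega
  | succ N ih =>
    intro f hmono hsub hempty k s hk hs v hv T OPT hOPT hval hcard hN
    have hnn : ∀ A : Finset (Fin n), 0 ≤ f A := fun A => by
      have := hmono ∅ A (Finset.empty_subset A); linarith [hempty ▸ this]
    -- dispose of the trivial case OPT = ∅ (then v = 0)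
    by_cases hOne : OPT.Nonempty
    swap
    · have : OPT = ∅ := Finset.not_nonempty_iff_eq_empty.mp hOne
      have hv0 : v = 0 := le_antisymm (by rw [this] at hval; linarith [hempty]) hv
      rw [hv0, mul_zero]
      exact hnn _
    have hsumle : ∀ A : Finset (Fin n), f A ≤ ∑ a ∈ A, f {a} := by
      intro A
      induction A using Finset.induction_on with
      | empty => simp [hempty]
      | @insert a B haB ihA =>
        have h := hsub {a} B
        have h1 : {a} ∪ B = insert a B := by rw [Finset.insert_eq]
        rw [h1] at h
        have h0 : 0 ≤ f ({a} ∩ B) := hnn _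
        rw [Finset.sum_insert haB]
        linarith
    have hmarg : ∀ (A : Finset (Fin n)) (o : Fin n), o ∈ A →
        f A ≤ f (A.erase o) + f {o} := by
      intro A o ho
      have h := hsub {o} (A.erase o)
      have h1 : {o} ∪ A.erase o = A := by
        rw [← Finset.insert_eq]
        exact Finset.insert_erase ho
      have h2 : {o} ∩ A.erase o = ∅ := by
        simp [Finset.singleton_inter_of_notMem (Finset.notMem_erase o A)]
      rw [h1, h2, hempty] at h
      linarith
    by_cases hbase : k ≤ 1 ∨ s ≤ 1
    · -- base case: k = 1 or s = 1
      rw [Cardinality.eq_def, dif_pos hbase]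
      obtain ⟨o₀, ho₀⟩ := id hOne
      have hTne : T.Nonempty := ⟨o₀, hOPT ho₀⟩
      obtain ⟨m, hmT, heq, hmax⟩ := argmaxSingle_spec f T hTne
      rw [heq]
      rcases hbase with hk1 | hs1
      · -- k = 1
        have hk1' : k = 1 := le_antisymm hk1 hk
        subst hk1'
        have hcard1 : OPT.card = 1 := le_antisymm hcard (Finset.one_le_card.mpr hOne)
        obtain ⟨o, hOeq⟩ := Finset.card_eq_one.mp hcard1
        have hoT : o ∈ T := hOPT (hOeq ▸ Finset.mem_singleton_self o)
        have hvo : v ≤ f {o} := by rw [hOeq] at hval; exact hval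
        have hvm : v ≤ f {m} := hvo.trans (hmax o hoT)
        have hSpos : (0:ℝ) < s := by exact_mod_cast hs
        have e1 : ((1:ℕ):ℝ) + (s:ℝ) - 1 = (s:ℝ) := by push_cast; ring
        rw [e1, div_self (ne_of_gt hSpos), one_mul]
        exact hvm
      · -- s = 1
        have hs1' : s = 1 := le_antisymm hs1 hs
        subst hs1'
        have h1 : v ≤ ∑ o ∈ OPT, f {o} := hval.trans (hsumle OPT)
        have h2 : ∑ o ∈ OPT, f {o} ≤ OPT.card • f {m} :=
          Finset.sum_le_card_nsmul _ _ _ (fun x hx => hmax x (hOPT hx))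
        rw [nsmul_eq_mul] at h2
        have h3 : (OPT.card : ℝ) * f {m} ≤ (k : ℝ) * f {m} := by
          apply mul_le_mul_of_nonneg_right _ (hnn _)
          exact_mod_cast hcard
        have hKpos : (0:ℝ) < k := by exact_mod_cast hk
        have e1 : (k:ℝ) + ((1:ℕ):ℝ) - 1 = (k:ℝ) := by push_cast; ring
        rw [e1]
        rw [div_mul_eq_mul_div, div_le_iff₀ hKpos]
        push_cast
        nlinarith
    · -- recursive case: k ≥ 2 and s ≥ 2
      have hk2 : 2 ≤ k := by omega
      have hs2 : 2 ≤ s := by omega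
      have hkR : (2:ℝ) ≤ (k:ℝ) := by exact_mod_cast hk2
      have hsR : (2:ℝ) ≤ (s:ℝ) := by exact_mod_cast hs2
      have hb : (0:ℝ) < (k:ℝ) + (s:ℝ) - 1 := by linarith
      have ha : (0:ℝ) < (k:ℝ) + (s:ℝ) - 2 := by linarith
      -- Branch 2 guarantee (case A: some OPT element has small singleton value)
      have hA2 : (∃ o ∈ OPT, f {o} ≤ v / ((k:ℝ) + (s:ℝ) - 1)) →
          (s:ℝ) / ((k:ℝ) + (s:ℝ) - 1) * v ≤
            f (Cardinality (k-1) s (((k:ℝ) + (s:ℝ) - 2) / ((k:ℝ) + (s:ℝ) - 1) * v) f T) := by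
        rintro ⟨o, hoO, hofe⟩
        have hv2 : (0:ℝ) ≤ ((k:ℝ) + (s:ℝ) - 2) / ((k:ℝ) + (s:ℝ) - 1) * v :=
          mul_nonneg (div_nonneg (by linarith) (by linarith)) hv
        have hval2 : ((k:ℝ) + (s:ℝ) - 2) / ((k:ℝ) + (s:ℝ) - 1) * v ≤ f (OPT.erase o) := by
          have hm := hmarg OPT o hoO
          have heqv : ((k:ℝ) + (s:ℝ) - 2) / ((k:ℝ) + (s:ℝ) - 1) * v
              = v - v / ((k:ℝ) + (s:ℝ) - 1) := by
            field_simp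
            ring
          rw [heqv]
          linarith
        have hcard2 : (OPT.erase o).card ≤ k - 1 := by
          have := Finset.card_erase_of_mem hoO
          have h1 : 1 ≤ OPT.card := Finset.one_le_card.mpr hOne
          omega
        have hrec := ih f hmono hsub hempty (k-1) s (by omega) hs
          (((k:ℝ) + (s:ℝ) - 2) / ((k:ℝ) + (s:ℝ) - 1) * v) hv2
          T (OPT.erase o) ((Finset.erase_subset o OPT).trans hOPT) hval2 hcard2 (by omega)
        have hcast : ((k - 1 : ℕ) : ℝ) = (k:ℝ) - 1 := by
          push_cast [hk]
          ring
        rw [hcast] at hrec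
        have heq2 : (s:ℝ) / ((k:ℝ) - 1 + (s:ℝ) - 1) *
            (((k:ℝ) + (s:ℝ) - 2) / ((k:ℝ) + (s:ℝ) - 1) * v)
            = (s:ℝ) / ((k:ℝ) + (s:ℝ) - 1) * v := by
          have h2 : (k:ℝ) - 1 + (s:ℝ) - 1 = (k:ℝ) + (s:ℝ) - 2 := by ring
          rw [h2]
          field_simp
        linarith [heq2 ▸ hrec]
      -- Branch 1 guarantee (case B)
      have hB2 : ∀ e : Fin n, e ∈ T → v / ((k:ℝ) + (s:ℝ) - 1) ≤ f {e} →
          (∀ o ∈ OPT, e ≤ o) →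
          (s:ℝ) / ((k:ℝ) + (s:ℝ) - 1) * v ≤
            f (insert e (Cardinality k (s-1) (v - f {e})
              (fun A => f (insert e A) - f {e}) (T.filter (fun x => e < x)))) := by
        intro e heT hfe hele
        set S' := Cardinality k (s-1) (v - f {e})
          (fun A => f (insert e A) - f {e}) (T.filter (fun x => e < x)) with hS'def
        have hfeA : f {e} ≤ f (insert e S') :=
          hmono _ _ (Finset.singleton_subset_iff.mpr (Finset.mem_insert_self e S'))
        by_cases hfev : v ≤ f {e}
        · have hle1 : (s:ℝ) / ((k:ℝ) + (s:ℝ) - 1) ≤ 1 :=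
            (div_le_one hb).mpr (by linarith)
          calc (s:ℝ) / ((k:ℝ) + (s:ℝ) - 1) * v ≤ 1 * v :=
                mul_le_mul_of_nonneg_right hle1 hv
            _ = v := one_mul v
            _ ≤ f {e} := hfev
            _ ≤ f (insert e S') := hfeA
        · push_neg at hfev
          -- apply the induction hypothesis to the marginal function
          set g : Finset (Fin n) → ℝ := fun A => f (insert e A) - f {e} with hgdef
          have hgmono : ∀ A B : Finset (Fin n), A ⊆ B → g A ≤ g B := by
            intro A B hAB
            exact sub_le_sub_right (hmono _ _ (Finset.insert_subset_insert e hAB)) _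
          have hgsub : ∀ A B : Finset (Fin n), g (A ∪ B) + g (A ∩ B) ≤ g A + g B := by
            intro A B
            have hu : insert e (A ∪ B) = insert e A ∪ insert e B := by
              simp [Finset.insert_union, Finset.union_insert]
            have hi : insert e (A ∩ B) = insert e A ∩ insert e B :=
              Finset.insert_inter_distrib A B e
            have := hsub (insert e A) (insert e B)
            simp only [hgdef]
            rw [hu, hi]
            linarith
          have hgempty : g ∅ = 0 := by simp [hgdef]
          have hOPT' : OPT.erase e ⊆ T.filter (fun x => e < x) := by
            intro x hx
            obtain ⟨hxne, hxO⟩ := Finset.mem_erase.mp hx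
            exact Finset.mem_filter.mpr ⟨hOPT hxO, lt_of_le_of_ne (hele x hxO) (Ne.symm hxne)⟩
          have hval' : v - f {e} ≤ g (OPT.erase e) := by
            have hsubset : OPT ⊆ insert e (OPT.erase e) := by
              intro x hx
              by_cases hxe : x = e
              · subst hxe
                exact Finset.mem_insert_self x _
              · exact Finset.mem_insert_of_mem (Finset.mem_erase.mpr ⟨hxe, hx⟩)
            have := hmono _ _ hsubset
            simp only [hgdef]
            linarith
          have hcard' : (OPT.erase e).card ≤ k :=
            (Finset.card_erase_le).trans hcard
          have hrec := ih g hgmono hgsub hgempty k (s-1) hk (by omega)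
            (v - f {e}) (by linarith) (T.filter (fun x => e < x)) (OPT.erase e)
            hOPT' hval' hcard' (by omega)
          have hcast : ((s - 1 : ℕ) : ℝ) = (s:ℝ) - 1 := by
            push_cast [hs]
            ring
          rw [hcast] at hrec
          have hgS' : g S' = f (insert e S') - f {e} := rfl
          rw [hgS'] at hrec
          have harg : (k:ℝ) + ((s:ℝ) - 1) - 1 = (k:ℝ) + (s:ℝ) - 2 := by ring
          rw [harg] at hrec
          -- final arithmetic
          set A := f (insert e S') with hAdef
          set fe := f {e} with hfedef
          rw [div_mul_eq_mul_div, div_le_iff₀ ha] at hrec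
          have hfe' : v ≤ fe * ((k:ℝ) + (s:ℝ) - 1) := by
            rw [div_le_iff₀ hb] at hfe
            linarith
          rw [div_mul_eq_mul_div, div_le_iff₀ hb]
          have h4 : ((s:ℝ) - 1) * (v - fe) * ((k:ℝ) + (s:ℝ) - 1)
              ≤ (A - fe) * ((k:ℝ) + (s:ℝ) - 2) * ((k:ℝ) + (s:ℝ) - 1) := by
            apply mul_le_mul_of_nonneg_right hrec hb.le
          have h5 : (0:ℝ) ≤ ((k:ℝ) - 1) * (fe * ((k:ℝ) + (s:ℝ) - 1) - v) :=
            mul_nonneg (by linarith) (by linarith)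
          nlinarith [h4, h5, ha, hb]
      -- now unfold and combine
      rw [Cardinality.eq_def, dif_neg hbase]
      simp only
      by_cases hA : ∃ o ∈ OPT, f {o} ≤ v / ((k:ℝ) + (s:ℝ) - 1)
      · have hS2 := hA2 hA
        split_ifs with h1 h2 h3
        · linarith
        · exact hS2
        · linarith [hnn (∅ : Finset (Fin n))]
        · exact hS2
      · push_neg at hA
        have hele : ∀ o ∈ OPT, o ∈ T.filter (fun e => v / ((k:ℝ) + (s:ℝ) - 1) ≤ f {e}) :=
          fun o hoO => Finset.mem_filter.mpr ⟨hOPT hoO, (hA o hoO).le⟩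
        have hFne : (T.filter (fun e => v / ((k:ℝ) + (s:ℝ) - 1) ≤ f {e})).Nonempty := by
          obtain ⟨o₀, ho₀⟩ := id hOne
          exact ⟨o₀, hele o₀ ho₀⟩
        have hS1 : ∀ (h1 : (T.filter (fun e => v / ((k:ℝ) + (s:ℝ) - 1) ≤ f {e})).Nonempty),
            (s:ℝ) / ((k:ℝ) + (s:ℝ) - 1) * v ≤
              f (insert ((T.filter (fun e => v / ((k:ℝ) + (s:ℝ) - 1) ≤ f {e})).min' h1)
                (Cardinality k (s-1)
                  (v - f {(T.filter (fun e => v / ((k:ℝ) + (s:ℝ) - 1) ≤ f {e})).min' h1})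
                  (fun A => f (insert ((T.filter (fun e => v / ((k:ℝ) + (s:ℝ) - 1) ≤ f {e})).min' h1) A)
                    - f {(T.filter (fun e => v / ((k:ℝ) + (s:ℝ) - 1) ≤ f {e})).min' h1})
                  (T.filter (fun x =>
                    (T.filter (fun e => v / ((k:ℝ) + (s:ℝ) - 1) ≤ f {e})).min' h1 < x)))) := by
          intro h1
          have hemem := Finset.min'_mem (T.filter (fun e => v / ((k:ℝ) + (s:ℝ) - 1) ≤ f {e})) h1
          obtain ⟨heT, hefe⟩ := Finset.mem_filter.mp hemem
          refine hB2 _ heT hefe ?_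
          intro o hoO
          exact Finset.min'_le _ o (hele o hoO)
        split_ifs with h1
        · exact hS1 hFne
        · linarith [hS1 hFne]

theorem cardinality_procedure_guarantee {n : ℕ} (f : Finset (Fin n) → ℝ)
    (hmono : ∀ A B : Finset (Fin n), A ⊆ B → f A ≤ f B)
    (hsub : ∀ A B : Finset (Fin n), f (A ∪ B) + f (A ∩ B) ≤ f A + f B)
    (hempty : f ∅ = 0)
    (k s : ℕ) (hk : 1 ≤ k) (hs : 1 ≤ s) (v : ℝ) (hv : 0 ≤ v)
    (T : Finset (Fin n)) (OPT : Finset (Fin n)) (hOPT : OPT ⊆ T)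
    (hval : v ≤ f OPT) (hcard : OPT.card ≤ k) :
    (s : ℝ) / ((k : ℝ) + s - 1) * v ≤ f (Cardinality k s v f T) ∧
      (Cardinality k s v f T).card ≤ s :=
  ⟨cardinality_value (k+s) f hmono hsub hempty k s hk hs v hv T OPT hOPT hval hcard le_rfl,
   cardinality_card_le (k+s) k s v f T le_rfl hs⟩
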